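/- If a : [0,∞) → [0,∞) is a C¹ increasing bijection with a(0)=0 and a₀ ≤ t·a'(t)/a(t) ≤ a₁ for all t>0, then its inverse a⁻¹ satisfies min(s^{1/a₀}, s^{1/a₁})·a⁻¹(t) ≤ a⁻¹(s·t) ≤ max(s^{1/a₀}, s^{1/a₁})·a⁻¹(t) for all s,t ≥ 0. -/

import Mathlib

open Real Set

/-- If `p * a t ≤ t * a' t` on `(0,∞)`, then `t ↦ a t * t ^ (-p)` is monotone on `(0,∞)`. -/
lemma stmt4_aux_mono (a a' : ℝ → ℝ) (p : ℝ)
    (hderiv : ∀ t > (0:ℝ), HasDerivAt a (a' t) t)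
    (h : ∀ t > (0:ℝ), p * a t ≤ t * a' t) :
    MonotoneOn (fun t => a t * t ^ (-p)) (Set.Ioi 0) := by
  have hF : ∀ t ∈ Set.Ioi (0:ℝ), HasDerivAt (fun t => a t * t ^ (-p))
      (t ^ (-p-1) * (t * a' t - p * a t)) t := by
    intro t ht
    have ht' : (0:ℝ) < t := ht
    have h1 : HasDerivAt (fun t : ℝ => t ^ (-p)) (-p * t ^ (-p-1)) t :=
      Real.hasDerivAt_rpow_const (Or.inl ht'.ne')
    have h2 : HasDerivAt (fun t => a t * t ^ (-p)) (a' t * t ^ (-p) + a t * (-p * t ^ (-p - 1))) t := (hderiv t ht').mul h1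
    have he : t ^ (-p-1) = t ^ (-p) / t := by
      rw [show -p-1 = -p - 1 from rfl, Real.rpow_sub ht', Real.rpow_one]
    convert h2 using 1
    rw [he]
    field_simp
    ring
  apply monotoneOn_of_deriv_nonneg (convex_Ioi 0)
  · intro t ht
    exact (hF t ht).continuousAt.continuousWithinAt
  · rw [interior_Ioi]
    intro t ht
    exact (hF t ht).differentiableAt.differentiableWithinAt
  · rw [interior_Ioi]
    intro t ht
    rw [(hF t ht).deriv]
    have ht' : (0:ℝ) < t := ht
    have := h t ht'
    have hpow : (0:ℝ) ≤ t ^ (-p-1) := Real.rpow_nonneg ht'.le _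
    nlinarith

/-- If `t * a' t ≤ p * a t` on `(0,∞)`, then `t ↦ a t * t ^ (-p)` is antitone on `(0,∞)`. -/
lemma stmt4_aux_anti (a a' : ℝ → ℝ) (p : ℝ)
    (hderiv : ∀ t > (0:ℝ), HasDerivAt a (a' t) t)
    (h : ∀ t > (0:ℝ), t * a' t ≤ p * a t) :
    AntitoneOn (fun t => a t * t ^ (-p)) (Set.Ioi 0) := by
  have hF : ∀ t ∈ Set.Ioi (0:ℝ), HasDerivAt (fun t => a t * t ^ (-p))
      (t ^ (-p-1) * (t * a' t - p * a t)) t := by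
    intro t ht
    have ht' : (0:ℝ) < t := ht
    have h1 : HasDerivAt (fun t : ℝ => t ^ (-p)) (-p * t ^ (-p-1)) t :=
      Real.hasDerivAt_rpow_const (Or.inl ht'.ne')
    have h2 : HasDerivAt (fun t => a t * t ^ (-p)) (a' t * t ^ (-p) + a t * (-p * t ^ (-p - 1))) t := (hderiv t ht').mul h1
    have he : t ^ (-p-1) = t ^ (-p) / t := by
      rw [show -p-1 = -p - 1 from rfl, Real.rpow_sub ht', Real.rpow_one]
    convert h2 using 1
    rw [he]
    field_simp
    ring
  apply antitoneOn_of_deriv_nonpos (convex_Ioi 0)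
  · intro t ht
    exact (hF t ht).continuousAt.continuousWithinAt
  · rw [interior_Ioi]
    intro t ht
    exact (hF t ht).differentiableAt.differentiableWithinAt
  · rw [interior_Ioi]
    intro t ht
    rw [(hF t ht).deriv]
    have ht' : (0:ℝ) < t := ht
    have := h t ht'
    have hpow : (0:ℝ) ≤ t ^ (-p-1) := Real.rpow_nonneg ht'.le _
    nlinarith

lemma stmt4_rescale (a : ℝ → ℝ) (p : ℝ) {w c : ℝ} (hw : 0 < w) (hc : 0 < c)
    (h : a w * w ^ (-p) ≤ a (c*w) * (c*w) ^ (-p)) : c ^ p * a w ≤ a (c*w) := by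
  have hwp : (0:ℝ) < w ^ (-p) := Real.rpow_pos_of_pos hw _
  have hcp : (0:ℝ) < c ^ p := Real.rpow_pos_of_pos hc _
  rw [Real.mul_rpow hc.le hw.le, ← mul_assoc] at h
  have h2 : a w ≤ a (c*w) * c ^ (-p) := (mul_le_mul_iff_of_pos_right hwp).mp h
  have h3 := mul_le_mul_of_nonneg_left h2 hcp.le
  have h4 : c ^ p * (a (c*w) * c ^ (-p)) = a (c*w) := by
    rw [Real.rpow_neg hc.le]
    field_simp
  linarith [h3, h4.le, h4.ge]

lemma stmt4_rescale' (a : ℝ → ℝ) (p : ℝ) {w c : ℝ} (hw : 0 < w) (hc : 0 < c)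
    (h : a (c*w) * (c*w) ^ (-p) ≤ a w * w ^ (-p)) : a (c*w) ≤ c ^ p * a w := by
  have hwp : (0:ℝ) < w ^ (-p) := Real.rpow_pos_of_pos hw _
  have hcp : (0:ℝ) < c ^ p := Real.rpow_pos_of_pos hc _
  rw [Real.mul_rpow hc.le hw.le, ← mul_assoc] at h
  have h2 : a (c*w) * c ^ (-p) ≤ a w := (mul_le_mul_iff_of_pos_right hwp).mp h
  have h3 := mul_le_mul_of_nonneg_left h2 hcp.le
  have h4 : c ^ p * (a (c*w) * c ^ (-p)) = a (c*w) := by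
    rw [Real.rpow_neg hc.le]
    field_simp
  linarith [h3, h4.le, h4.ge]

/-- Inequality (2.5): if `a` is a `C¹` increasing bijection of `[0,∞)` with `a(0)=0` satisfying
the structure condition, then its inverse `a⁻¹` satisfies
`min(s^{1/a₀}, s^{1/a₁})·a⁻¹(t) ≤ a⁻¹(s·t) ≤ max(s^{1/a₀}, s^{1/a₁})·a⁻¹(t)` for `s,t ≥ 0`. -/
theorem stmt_4 (a a' ainv : ℝ → ℝ) (a₀ a₁ : ℝ)
    (ha₀ : 0 < a₀) (ha₀₁ : a₀ ≤ a₁)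
    (hcont : ContinuousOn a (Set.Ici 0))
    (hderiv : ∀ t > (0:ℝ), HasDerivAt a (a' t) t)
    (haz : a 0 = 0)
    (hpos : ∀ t > (0:ℝ), 0 < a t)
    (hmono : StrictMonoOn a (Set.Ici 0))
    (hsurj : ∀ y ≥ (0:ℝ), ∃ t ≥ (0:ℝ), a t = y)
    (hstruct : ∀ t > (0:ℝ), a₀ ≤ t * a' t / a t ∧ t * a' t / a t ≤ a₁)
    (hainv_nn : ∀ t ≥ (0:ℝ), 0 ≤ ainv t)
    (hainv_right : ∀ t ≥ (0:ℝ), a (ainv t) = t)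
    (hainv_left : ∀ t ≥ (0:ℝ), ainv (a t) = t) :
    ∀ s ≥ (0:ℝ), ∀ t ≥ (0:ℝ),
      min (s ^ (1/a₀)) (s ^ (1/a₁)) * ainv t ≤ ainv (s * t) ∧
      ainv (s * t) ≤ max (s ^ (1/a₀)) (s ^ (1/a₁)) * ainv t := by
  have ha₁ : 0 < a₁ := lt_of_lt_of_le ha₀ ha₀₁
  have hinv0 : ainv 0 = 0 := by
    have := hainv_left 0 le_rfl
    rwa [haz] at this
  intro s hs t ht
  rcases eq_or_lt_of_le hs with hs0 | hs0
  · -- s = 0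
    have e0 : (0:ℝ) ^ (1/a₀) = 0 := Real.zero_rpow (one_div_pos.mpr ha₀).ne'
    have e1 : (0:ℝ) ^ (1/a₁) = 0 := Real.zero_rpow (one_div_pos.mpr ha₁).ne'
    rw [← hs0, zero_mul, hinv0, e0, e1, min_self, max_self]
    simp
  rcases eq_or_lt_of_le ht with ht0 | ht0
  · -- t = 0
    rw [← ht0, mul_zero]
    simp [hinv0]
  -- main case: s > 0, t > 0
  have hGmono : MonotoneOn (fun t => a t * t ^ (-a₀)) (Set.Ioi 0) := by
    apply stmt4_aux_mono a a' a₀ hderiv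
    intro r hr
    have h1 := (hstruct r hr).1
    have h2 := hpos r hr
    rw [le_div_iff₀ h2] at h1
    linarith
  have hHanti : AntitoneOn (fun t => a t * t ^ (-a₁)) (Set.Ioi 0) := by
    apply stmt4_aux_anti a a' a₁ hderiv
    intro r hr
    have h1 := (hstruct r hr).2
    have h2 := hpos r hr
    rw [div_le_iff₀ h2] at h1
    linarith
  set u := ainv t with hu
  set v := ainv (s*t) with hv
  have hu0 : 0 ≤ u := hainv_nn t ht
  have hau : a u = t := hainv_right t ht
  have hupos : 0 < u := by
    rcases hu0.eq_or_lt with h | h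
    · exfalso; rw [← h] at hau; rw [haz] at hau; linarith
    · exact h
  have hst0 : (0:ℝ) ≤ s * t := by positivity
  have hv0 : 0 ≤ v := hainv_nn _ hst0
  have hav : a v = s * a u := by rw [hau]; exact hainv_right _ hst0
  set l₀ := s ^ (1/a₀) with hl₀
  set l₁ := s ^ (1/a₁) with hl₁
  have hl₀pos : 0 < l₀ := Real.rpow_pos_of_pos hs0 _
  have hl₁pos : 0 < l₁ := Real.rpow_pos_of_pos hs0 _
  have hl₀pow : l₀ ^ a₀ = s := by
    rw [hl₀, ← Real.rpow_mul hs0.le, one_div_mul_cancel ha₀.ne', Real.rpow_one]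
  have hl₁pow : l₁ ^ a₁ = s := by
    rw [hl₁, ← Real.rpow_mul hs0.le, one_div_mul_cancel ha₁.ne', Real.rpow_one]
  have humem : u ∈ Set.Ioi (0:ℝ) := hupos
  rcases le_total 1 s with hs1 | hs1
  · -- s ≥ 1 : l₀ ≥ 1, l₁ ≥ 1
    have hl₀1 : 1 ≤ l₀ := by
      rw [hl₀]
      calc (1:ℝ) = 1 ^ (1/a₀) := (Real.one_rpow _).symm
        _ ≤ s ^ (1/a₀) := Real.rpow_le_rpow zero_le_one hs1 (one_div_pos.mpr ha₀).le
    have hl₁1 : 1 ≤ l₁ := by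
      rw [hl₁]
      calc (1:ℝ) = 1 ^ (1/a₁) := (Real.one_rpow _).symm
        _ ≤ s ^ (1/a₁) := Real.rpow_le_rpow zero_le_one hs1 (one_div_pos.mpr ha₁).le
    -- upper bound : v ≤ l₀ * u
    have hG := hGmono humem (Set.mem_Ioi.mpr (by positivity : (0:ℝ) < l₀ * u))
      (le_mul_of_one_le_left hu0 hl₀1)
    have hub : a v ≤ a (l₀ * u) := by
      have := stmt4_rescale a a₀ hupos hl₀pos hG
      rw [hl₀pow] at this
      rw [hav]; linarith
    have hvle : v ≤ l₀ * u := by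
      refine (hmono.le_iff_le (Set.mem_Ici.mpr hv0) (Set.mem_Ici.mpr (by positivity))).mp hub
    -- lower bound : l₁ * u ≤ v
    have hH := hHanti humem (Set.mem_Ioi.mpr (by positivity : (0:ℝ) < l₁ * u))
      (le_mul_of_one_le_left hu0 hl₁1)
    have hlb : a (l₁ * u) ≤ a v := by
      have := stmt4_rescale' a a₁ hupos hl₁pos hH
      rw [hl₁pow] at this
      rw [hav]; linarith
    have hvge : l₁ * u ≤ v := by
      refine (hmono.le_iff_le (Set.mem_Ici.mpr (by positivity)) (Set.mem_Ici.mpr hv0)).mp hlb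
    constructor
    · calc min (s ^ (1/a₀)) (s ^ (1/a₁)) * u ≤ l₁ * u :=
          mul_le_mul_of_nonneg_right (min_le_right _ _) hu0
        _ ≤ v := hvge
    · calc v ≤ l₀ * u := hvle
        _ ≤ max (s ^ (1/a₀)) (s ^ (1/a₁)) * u :=
          mul_le_mul_of_nonneg_right (le_max_left _ _) hu0
  · -- s ≤ 1 : l₀ ≤ 1, l₁ ≤ 1
    have hl₀1 : l₀ ≤ 1 := by
      rw [hl₀]
      calc s ^ (1/a₀) ≤ 1 ^ (1/a₀) := Real.rpow_le_rpow hs0.le hs1 (one_div_pos.mpr ha₀).le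
        _ = 1 := Real.one_rpow _
    have hl₁1 : l₁ ≤ 1 := by
      rw [hl₁]
      calc s ^ (1/a₁) ≤ 1 ^ (1/a₁) := Real.rpow_le_rpow hs0.le hs1 (one_div_pos.mpr ha₁).le
        _ = 1 := Real.one_rpow _
    -- lower bound : l₀ * u ≤ v
    have hG := hGmono (Set.mem_Ioi.mpr (by positivity : (0:ℝ) < l₀ * u)) humem
      (mul_le_of_le_one_left hu0 hl₀1)
    have hlb : a (l₀ * u) ≤ a v := by
      have := stmt4_rescale' a a₀ hupos hl₀pos hG
      rw [hl₀pow] at this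
      rw [hav]; linarith
    have hvge : l₀ * u ≤ v := by
      refine (hmono.le_iff_le (Set.mem_Ici.mpr (by positivity)) (Set.mem_Ici.mpr hv0)).mp hlb
    -- upper bound : v ≤ l₁ * u
    have hH := hHanti (Set.mem_Ioi.mpr (by positivity : (0:ℝ) < l₁ * u)) humem
      (mul_le_of_le_one_left hu0 hl₁1)
    have hub : a v ≤ a (l₁ * u) := by
      have := stmt4_rescale a a₁ hupos hl₁pos hH
      rw [hl₁pow] at this
      rw [hav]; linarith
    have hvle : v ≤ l₁ * u := by
      refine (hmono.le_iff_le (Set.mem_Ici.mpr hv0) (Set.mem_Ici.mpr (by positivity))).mp hub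
    constructor
    · calc min (s ^ (1/a₀)) (s ^ (1/a₁)) * u ≤ l₀ * u :=
          mul_le_mul_of_nonneg_right (min_le_left _ _) hu0
        _ ≤ v := hvge
    · calc v ≤ l₁ * u := hvle
        _ ≤ max (s ^ (1/a₀)) (s ^ (1/a₁)) * u :=
          mul_le_mul_of_nonneg_right (le_max_right _ _) hu0
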